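/- Let G be a connected multigraph on n vertices, let D ∈ {0,1,…,n−1}, let V_L be the set of vertices of degree ≤ D and V_H = V \ V_L. Let E' ⊆ E(G) contain all edges incident on each vertex of V_L and at least D edges incident on each vertex of V_H. Then the graph (V, E') has at most ⌊n/D⌋ connected components. -/
import Mathlib


/-- Let `G` be a connected graph on `n` vertices, `D ≤ n - 1`
with `D ≥ 1`, and let `G' ≤ G` be a subgraph containing all edges incident on
each vertex of degree ≤ D, and at least `D` edges incident on each vertex of
degree > D. Then `G'` has at most `⌊n / D⌋` connected components. -/
theorem stmt4 (V : Type) [Fintype V] [DecidableEq V]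
    (G G' : SimpleGraph V) [DecidableRel G.Adj] [DecidableRel G'.Adj]
    (n D : ℕ) (hn : Fintype.card V = n) (hD : 1 ≤ D) (hDn : D ≤ n - 1)
    (hconn : G.Connected) (hsub : G' ≤ G)
    (hlow : ∀ v : V, G.degree v ≤ D → ∀ w, G.Adj v w → G'.Adj v w)
    (hhigh : ∀ v : V, D < G.degree v → D ≤ G'.degree v) :
    Nat.card G'.ConnectedComponent ≤ n / D := by
  classical
  have hn1 : 1 ≤ n := by
    by_contra h
    push_neg at h
    interval_cases n
    · simp at hDn; omega
  have hDle : D ≤ n := by omega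
  haveI : Fintype G'.ConnectedComponent := Fintype.ofFinite _
  rw [Nat.card_eq_fintype_card, Nat.le_div_iff_mul_le hD]
  -- key: each fiber has at least D elements
  have key : ∀ c : G'.ConnectedComponent,
      D ≤ (Finset.univ.filter fun v => G'.connectedComponentMk v = c).card := by
    intro c
    obtain ⟨v, hv⟩ := c.exists_rep
    by_cases hhi : ∃ w, G'.connectedComponentMk w = c ∧ D < G.degree w
    · obtain ⟨w, hw, hwD⟩ := hhi
      have hsubset : G'.neighborFinset w ⊆
          Finset.univ.filter fun v => G'.connectedComponentMk v = c := by
        intro x hx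
        rw [SimpleGraph.mem_neighborFinset] at hx
        simp only [Finset.mem_filter, Finset.mem_univ, true_and]
        rw [← hw]
        exact (SimpleGraph.ConnectedComponent.connectedComponentMk_eq_of_adj hx.symm)
      calc D ≤ G'.degree w := hhigh w hwD
        _ = (G'.neighborFinset w).card := (G'.card_neighborFinset_eq_degree w).symm
        _ ≤ _ := Finset.card_le_card hsubset
    · push_neg at hhi
      -- all vertices in c are low; component is closed under G-adjacency
      have hall : ∀ u, G'.connectedComponentMk u = c := by
        have step : ∀ a b, G.Walk a b → G'.connectedComponentMk a = c →
            G'.connectedComponentMk b = c := by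
          intro a b p
          induction p with
          | nil => exact fun h => h
          | cons h p ih =>
            intro ha
            apply ih
            rw [← ha]
            exact (SimpleGraph.ConnectedComponent.connectedComponentMk_eq_of_adj
              (hlow _ (hhi _ ha) _ h)).symm
        intro u
        obtain ⟨p⟩ := hconn v u
        exact step v u p (hv ▸ rfl)
      have : (Finset.univ.filter fun v => G'.connectedComponentMk v = c) =
          Finset.univ := by
        ext x; simp [hall x]
      rw [this]
      simpa [hn] using hDle
  calc Fintype.card G'.ConnectedComponent * D
      = ∑ c : G'.ConnectedComponent, D := by simp [mul_comm]
    _ ≤ ∑ c : G'.ConnectedComponent,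
          (Finset.univ.filter fun v => G'.connectedComponentMk v = c).card :=
        Finset.sum_le_sum fun c _ => key c
    _ = Fintype.card V :=
        (Finset.card_eq_sum_card_fiberwise fun x _ => Finset.mem_univ _).symm
    _ = n := hn
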